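/- Fix (t,μ) ∈ (0,∞) × C. Suppose (a,v) and (a',v') in ℝ × H both satisfy: for a single function φ : (0,∞) × C → ℝ, φ(s,ν) = φ(t,μ) + a(s−t) + ⟨v, ν−μ⟩ + o( (|s−t|² + ‖ν−μ‖²)^{1/2} ) and also φ(s,ν) = φ(t,μ) + a'(s−t) + ⟨v', ν−μ⟩ + o( (|s−t|² + ‖ν−μ‖²)^{1/2} ) as (s,ν) → (t,μ) with (s,ν) ranging over (0,∞) × C. Then (a,v) = (a',v'). (Derivatives relative to the cone C are unique.) -/

import Mathlib

open MeasureTheory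

/-- Lebesgue measure restricted to `[0,1)`. -/
noncomputable def mu0 : Measure ℝ := volume.restrict (Set.Ico (0 : ℝ) 1)

/-- The Hilbert space `H = L²([0,1))`. -/
noncomputable abbrev Hsp : Type := Lp ℝ 2 mu0

/-- The cone `C ⊂ H` of (classes of) functions with a nondecreasing nonnegative
representative on `[0,1)`. -/
def coneC : Set Hsp :=
  {f | ∃ g : ℝ → ℝ, MonotoneOn g (Set.Ico 0 1) ∧ (∀ x ∈ Set.Ico (0 : ℝ) 1, 0 ≤ g x) ∧
    (f : ℝ → ℝ) =ᵐ[mu0] g}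

lemma mu0_def : mu0 = volume.restrict (Set.Ico (0:ℝ) 1) := rfl

instance : IsFiniteMeasure mu0 := by
  rw [mu0]; infer_instance

lemma coneC_add_smul {f g : Hsp} (hf : f ∈ coneC) (hg : g ∈ coneC) {c : ℝ} (hc : 0 ≤ c) :
    f + c • g ∈ coneC := by
  obtain ⟨gf, hgf_mono, hgf_nn, hgf_ae⟩ := hf
  obtain ⟨gg, hgg_mono, hgg_nn, hgg_ae⟩ := hg
  refine ⟨fun x => gf x + c * gg x, ?_, ?_, ?_⟩
  · intro x hx y hy hxy
    exact add_le_add (hgf_mono hx hy hxy) (mul_le_mul_of_nonneg_left (hgg_mono hx hy hxy) hc)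
  · intro x hx
    exact add_nonneg (hgf_nn x hx) (mul_nonneg hc (hgg_nn x hx))
  · filter_upwards [Lp.coeFn_add f (c • g), Lp.coeFn_smul c g, hgf_ae, hgg_ae] with x h1 h2 h3 h4
    simp only [h1, Pi.add_apply, h2, Pi.smul_apply, smul_eq_mul, h3, h4]

lemma indicator_mem_coneC {c : ℝ} (hc : mu0 (Set.Ico c 1) ≠ ⊤) :
    (indicatorConstLp 2 measurableSet_Ico hc (1 : ℝ) : Hsp) ∈ coneC := by
  refine ⟨Set.indicator (Set.Ici c) (fun _ => 1), ?_, ?_, ?_⟩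
  · intro x hx y hy hxy
    by_cases hxc : c ≤ x
    · rw [Set.indicator_of_mem (Set.mem_Ici.mpr hxc), Set.indicator_of_mem (Set.mem_Ici.mpr (le_trans hxc hxy))]
    · rw [Set.indicator_of_notMem (fun h => hxc (Set.mem_Ici.mp h))]
      by_cases hyc : c ≤ y
      · rw [Set.indicator_of_mem (Set.mem_Ici.mpr hyc)]; norm_num
      · rw [Set.indicator_of_notMem (fun h => hyc (Set.mem_Ici.mp h))]
  · intro x _
    by_cases hxc : c ≤ x
    · rw [Set.indicator_of_mem (Set.mem_Ici.mpr hxc)]; norm_num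
    · rw [Set.indicator_of_notMem (fun h => hxc (Set.mem_Ici.mp h))]
  · filter_upwards [indicatorConstLp_coeFn (p := 2) (hs := measurableSet_Ico) (hμs := hc)
      (c := (1:ℝ)), ae_restrict_mem (μ := volume) (measurableSet_Ico (a := (0:ℝ)) (b := 1))]
      with x h1 h2
    rw [h1]
    by_cases hxc : c ≤ x
    · rw [Set.indicator_of_mem (Set.mem_Ico.mpr ⟨hxc, h2.2⟩), Set.indicator_of_mem (Set.mem_Ici.mpr hxc)]
    · rw [Set.indicator_of_notMem (fun h => hxc h.1), Set.indicator_of_notMem (fun h => hxc (Set.mem_Ici.mp h))]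

lemma ae_zero_of_Ico {μ : Measure ℝ} [IsFiniteMeasure μ] {f : ℝ → ℝ}
    (hint : Integrable f μ)
    (h : ∀ a b : ℝ, ∫ x in Set.Ico a b, f x ∂μ = 0) : f =ᵐ[μ] 0 := by
  have hmeas : AEMeasurable f μ := hint.aemeasurable
  have hfin : ∫⁻ x, ENNReal.ofReal (f x) ∂μ ≠ ⊤ := by
    refine ne_of_lt (lt_of_le_of_lt ?_ hint.2)
    exact lintegral_mono fun x => by
      rw [← ofReal_norm]
      exact ENNReal.ofReal_le_ofReal (le_abs_self _)
  have hfin' : ∫⁻ x, ENNReal.ofReal (-f x) ∂μ ≠ ⊤ := by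
    refine ne_of_lt (lt_of_le_of_lt ?_ hint.2)
    exact lintegral_mono fun x => by
      rw [← ofReal_norm]
      exact ENNReal.ofReal_le_ofReal (neg_le_abs _)
  have hset : ∀ a b : ℝ, ∫⁻ x in Set.Ico a b, ENNReal.ofReal (f x) ∂μ
      = ∫⁻ x in Set.Ico a b, ENNReal.ofReal (-f x) ∂μ := by
    intro a b
    have hi : Integrable f (μ.restrict (Set.Ico a b)) := hint.restrict
    have := integral_eq_lintegral_pos_part_sub_lintegral_neg_part hi
    rw [h a b] at this
    have hA : ∫⁻ x in Set.Ico a b, ENNReal.ofReal (f x) ∂μ ≠ ⊤ :=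
      ne_of_lt (lt_of_le_of_lt (setLIntegral_le_lintegral _ _) (lt_top_iff_ne_top.mpr hfin))
    have hB : ∫⁻ x in Set.Ico a b, ENNReal.ofReal (-f x) ∂μ ≠ ⊤ :=
      ne_of_lt (lt_of_le_of_lt (setLIntegral_le_lintegral _ _) (lt_top_iff_ne_top.mpr hfin'))
    have := sub_eq_zero.mp this.symm
    exact (ENNReal.toReal_eq_toReal_iff' hA hB).mp this
  have hwd : μ.withDensity (fun x => ENNReal.ofReal (f x))
      = μ.withDensity (fun x => ENNReal.ofReal (-f x)) := by
    have : IsFiniteMeasure (μ.withDensity (fun x => ENNReal.ofReal (f x))) :=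
      isFiniteMeasure_withDensity hfin
    refine Measure.ext_of_Ico _ _ (fun a b _ => ?_)
    rw [withDensity_apply _ measurableSet_Ico, withDensity_apply _ measurableSet_Ico]
    exact hset a b
  have hae := (withDensity_eq_iff (ENNReal.measurable_ofReal.comp_aemeasurable hmeas)
    (ENNReal.measurable_ofReal.comp_aemeasurable hmeas.neg) hfin).mp hwd
  filter_upwards [hae] with x hx
  simp only [Function.comp] at hx
  by_contra hne
  rcases lt_or_gt_of_ne hne with hlt | hgt
  · rw [ENNReal.ofReal_eq_zero.mpr (le_of_lt hlt)] at hx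
    exact absurd hx.symm (ne_of_gt (ENNReal.ofReal_pos.mpr (by simpa using hlt)))
  · rw [show ENNReal.ofReal ((-f) x) = 0 from ENNReal.ofReal_eq_zero.mpr (neg_nonpos.mpr hgt.le)]
      at hx
    exact absurd hx (ENNReal.ofReal_pos.mpr hgt).ne'

lemma eq_zero_of_inner_coneC (u : Hsp) (h : ∀ w ∈ coneC, inner (𝕜 := ℝ) u w = (0:ℝ)) :
    u = 0 := by
  have hint : Integrable (u : ℝ → ℝ) mu0 := MemLp.integrable one_le_two (Lp.memLp u)
  have hres : ∀ a b : ℝ, mu0.restrict (Set.Ico a b)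
      = volume.restrict (Set.Ico (max a 0) (min b 1)) := fun a b => by
    rw [mu0_def, Measure.restrict_restrict measurableSet_Ico, Set.Ico_inter_Ico]
  have hK : ∀ c : ℝ, 0 ≤ c → ∫ x in Set.Ico c 1, (u : ℝ → ℝ) x ∂volume = 0 := by
    intro c hc0
    by_cases hc : c < 1
    · have hfin : mu0 (Set.Ico c 1) ≠ ⊤ := measure_ne_top _ _
      have h0 := h _ (indicator_mem_coneC hfin)
      rw [real_inner_comm, L2.inner_indicatorConstLp_one measurableSet_Ico hfin u] at h0
      rw [hres, max_eq_left hc0, min_self] at h0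
      exact h0
    · rw [Set.Ico_eq_empty hc]; simp
  have hIab : ∀ a b : ℝ, ∫ x in Set.Ico a b, (u : ℝ → ℝ) x ∂mu0 = 0 := by
    intro a b
    rw [hres]
    set a' := max a 0 with ha'
    set b' := min b 1 with hb'
    by_cases h1 : a' < b'
    · have h0a : 0 ≤ a' := le_max_right _ _
      have hb1 : b' ≤ 1 := min_le_right _ _
      have hone : IntegrableOn (u : ℝ → ℝ) (Set.Ico 0 1) volume := hint
      have hi1 : IntegrableOn (u : ℝ → ℝ) (Set.Ico a' b') volume :=
        hone.mono_set (Set.Ico_subset_Ico h0a hb1)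
      have hi2 : IntegrableOn (u : ℝ → ℝ) (Set.Ico b' 1) volume :=
        hone.mono_set (Set.Ico_subset_Ico (h0a.trans h1.le) le_rfl)
      have hsplit := setIntegral_union (Set.Ico_disjoint_Ico_same)
        measurableSet_Ico hi1 hi2 (f := (u : ℝ → ℝ)) (μ := volume)
      rw [Set.Ico_union_Ico_eq_Ico h1.le hb1] at hsplit
      have h2 := hK a' h0a
      have h3 := hK b' (h0a.trans h1.le)
      rw [hsplit, h3] at h2
      simpa using h2
    · rw [Set.Ico_eq_empty h1]; simp
  have hae : (u : ℝ → ℝ) =ᵐ[mu0] 0 := ae_zero_of_Ico hint hIab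
  exact Lp.eq_zero_iff_ae_eq_zero.mpr hae

open Asymptotics in
theorem stmt7 (t : ℝ) (ht : 0 < t) (μ : Hsp) (hμ : μ ∈ coneC)
    (φ : ℝ → Hsp → ℝ) (a a' : ℝ) (v v' : Hsp)
    (h : (fun p : ℝ × Hsp =>
        φ p.1 p.2 - φ t μ - a * (p.1 - t) - inner (𝕜 := ℝ) v (p.2 - μ))
      =o[nhdsWithin (t, μ) (Set.Ioi (0 : ℝ) ×ˢ coneC)]
        (fun p : ℝ × Hsp => Real.sqrt ((p.1 - t) ^ 2 + ‖p.2 - μ‖ ^ 2)))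
    (h' : (fun p : ℝ × Hsp =>
        φ p.1 p.2 - φ t μ - a' * (p.1 - t) - inner (𝕜 := ℝ) v' (p.2 - μ))
      =o[nhdsWithin (t, μ) (Set.Ioi (0 : ℝ) ×ˢ coneC)]
        (fun p : ℝ × Hsp => Real.sqrt ((p.1 - t) ^ 2 + ‖p.2 - μ‖ ^ 2))) :
    a = a' ∧ v = v' := by
  set L := nhdsWithin (t, μ) (Set.Ioi (0 : ℝ) ×ˢ coneC) with hL
  have hd : (fun p : ℝ × Hsp => (a' - a) * (p.1 - t) + inner (𝕜 := ℝ) (v' - v) (p.2 - μ))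
      =o[L] (fun p : ℝ × Hsp => Real.sqrt ((p.1 - t) ^ 2 + ‖p.2 - μ‖ ^ 2)) := by
    have := h.sub h'
    refine this.congr_left (fun p => ?_)
    rw [inner_sub_left]
    ring
  -- Step 1 : a = a'
  have hb : a' - a = 0 := by
    have hmap : Filter.Tendsto (fun s : ℝ => (s, μ)) (nhds t) L := by
      rw [hL]
      refine tendsto_nhdsWithin_iff.mpr ⟨?_, ?_⟩
      · exact (continuous_id.prodMk continuous_const).tendsto t
      · filter_upwards [isOpen_Ioi.eventually_mem ht] with s hs
        exact ⟨hs, hμ⟩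
    have h1 := hd.comp_tendsto hmap
    simp only [Function.comp_def] at h1
    have h2 : (fun s : ℝ => (a' - a) * (s - t)) =o[nhds t] (fun s : ℝ => |s - t|) := by
      refine (h1.congr_left (fun s => ?_)).congr_right (fun s => ?_)
      · simp
      · simp [Real.sqrt_sq_eq_abs]
    by_contra hb0
    have hpos : 0 < |a' - a| := abs_pos.mpr hb0
    have h3 := (isLittleO_iff.mp h2) (half_pos hpos)
    have h4 : ∀ᶠ s in nhdsWithin t {t}ᶜ,
        ‖(a' - a) * (s - t)‖ ≤ |a' - a| / 2 * ‖|s - t|‖ := nhdsWithin_le_nhds h3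
    obtain ⟨s, hs1, hs2⟩ := (h4.and self_mem_nhdsWithin).exists
    simp only [norm_mul, Real.norm_eq_abs, abs_abs] at hs1
    have hst : 0 < |s - t| := abs_pos.mpr (sub_ne_zero.mpr hs2)
    nlinarith
  -- Step 2 : inner (v' - v) w = 0 for w in the cone
  have hv : ∀ w ∈ coneC, inner (𝕜 := ℝ) (v' - v) w = (0:ℝ) := by
    intro w hw
    by_cases hw0 : w = 0
    · simp [hw0]
    have hwpos : (0:ℝ) < ‖w‖ := norm_pos_iff.mpr hw0
    have hmap : Filter.Tendsto (fun ε : ℝ => (t, μ + ε • w)) (nhdsWithin 0 (Set.Ioi 0)) L := by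
      rw [hL]
      refine tendsto_nhdsWithin_iff.mpr ⟨?_, ?_⟩
      · have hc : Continuous (fun ε : ℝ => (t, μ + ε • w)) :=
          continuous_const.prodMk (continuous_const.add (continuous_id.smul continuous_const))
        have h0 := hc.tendsto 0
        simp only [zero_smul, add_zero] at h0
        exact h0.mono_left nhdsWithin_le_nhds
      · filter_upwards [self_mem_nhdsWithin] with ε (hε : ε ∈ Set.Ioi (0:ℝ))
        exact ⟨ht, coneC_add_smul hμ hw (le_of_lt hε)⟩
    have h1 := hd.comp_tendsto hmap
    simp only [Function.comp_def] at h1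
    have h2 : (fun ε : ℝ => ε * inner (𝕜 := ℝ) (v' - v) w)
        =o[nhdsWithin (0:ℝ) (Set.Ioi 0)] (fun ε : ℝ => |ε| * ‖w‖) := by
      refine (h1.congr_left (fun ε => ?_)).congr_right (fun ε => ?_)
      · simp [inner_smul_right, real_inner_smul_right]
      · show Real.sqrt ((t - t) ^ 2 + ‖μ + ε • w - μ‖ ^ 2) = |ε| * ‖w‖
        rw [sub_self, add_sub_cancel_left, norm_smul, Real.norm_eq_abs,
          zero_pow two_ne_zero, zero_add, Real.sqrt_sq (by positivity)]
    by_contra hc0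
    have hpos : 0 < |inner (𝕜 := ℝ) (v' - v) w| := abs_pos.mpr hc0
    have hδ : (0:ℝ) < |inner (𝕜 := ℝ) (v' - v) w| / (2 * ‖w‖) := by positivity
    have h3 := (isLittleO_iff.mp h2) hδ
    obtain ⟨ε, hε1, hε2⟩ := (h3.and self_mem_nhdsWithin).exists
    rw [norm_mul, Real.norm_eq_abs, Real.norm_eq_abs, norm_mul, Real.norm_eq_abs, abs_abs,
      Real.norm_eq_abs, abs_norm] at hε1
    have hεpos : (0:ℝ) < ε := hε2
    have : 0 < |ε| := abs_pos.mpr (ne_of_gt hεpos)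
    rw [div_mul_eq_mul_div] at hε1
    have h5 : |inner (𝕜 := ℝ) (v' - v) w| * (|ε| * ‖w‖) / (2 * ‖w‖)
        = |inner (𝕜 := ℝ) (v' - v) w| * |ε| / 2 := by
      field_simp
    rw [h5] at hε1
    nlinarith
  have hveq : v' - v = 0 := eq_zero_of_inner_coneC _ hv
  constructor
  · linarith [hb]
  · have := sub_eq_zero.mp hveq
    exact this.symm
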